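/- Let 0 < q ≤ p ≤ 2 and α > 0, and set s = α + 1/2 − 1/p. On the set of Besov coefficient sequences θ with ‖θ‖_{b_{p,q}^α} < ∞, the function ρ_{b_{p,q}^α}(θ, θ') = ‖θ − θ'‖_{b_{p,q}^α}^q is a semi-metric of negative type; consequently, the induced kernel κ(θ,θ') = ρ_{b_{p,q}^α}(θ, 0) + ρ_{b_{p,q}^α}(θ', 0) − ρ_{b_{p,q}^α}(θ, θ') (with the zero sequence as base point) is symmetric and positive definite: for every n ≥ 1, all θ₁,…,θₙ and all real c₁,…,cₙ, ∑_{i=1}^n ∑_{j=1}^n c_i c_j κ(θ_i, θ_j) ≥ 0. -/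

import Mathlib

open Real MeasureTheory Set

lemma qf_cos {n : ℕ} (x a : Fin n → ℝ) :
    0 ≤ ∑ i, ∑ j, a i * a j * Real.cos (x i - x j) := by
  have h : ∑ i, ∑ j, a i * a j * Real.cos (x i - x j)
      = (∑ i, a i * Real.cos (x i))^2 + (∑ i, a i * Real.sin (x i))^2 := by
    rw [sq, sq, Finset.sum_mul_sum, Finset.sum_mul_sum, ← Finset.sum_add_distrib]
    refine Finset.sum_congr rfl fun i _ => ?_
    rw [← Finset.sum_add_distrib]
    refine Finset.sum_congr rfl fun j _ => ?_
    rw [Real.cos_sub]; ring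
  rw [h]; positivity

lemma qf_sq {n : ℕ} (x a : Fin n → ℝ) (ha : ∑ i, a i = 0) :
    ∑ i, ∑ j, a i * a j * (x i - x j)^2 ≤ 0 := by
  have h1 : ∑ i, ∑ j, a i * a j * (x i - x j)^2
      = ∑ i, (a i * ∑ j, a j * x j^2 + a i * x i^2 * ∑ j, a j
          - 2 * (a i * x i * ∑ j, a j * x j)) := by
    refine Finset.sum_congr rfl fun i _ => ?_
    rw [Finset.mul_sum, Finset.mul_sum, Finset.mul_sum, Finset.mul_sum,
      ← Finset.sum_add_distrib, ← Finset.sum_sub_distrib]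
    exact Finset.sum_congr rfl fun j _ => by ring
  rw [h1]
  simp only [ha, mul_zero, add_zero]
  rw [Finset.sum_sub_distrib, ← Finset.sum_mul, ha]
  have : ∑ i, 2 * (a i * x i * ∑ j, a j * x j)
      = 2 * ((∑ i, a i * x i) * (∑ j, a j * x j)) := by
    rw [Finset.sum_mul, Finset.mul_sum]
  rw [this]
  nlinarith [sq_nonneg (∑ i, a i * x i)]

lemma one_sub_cos_le (u : ℝ) : 1 - Real.cos u ≤ u^2 / 2 := by
  have h : 1 - Real.cos u = 2 * Real.sin (u/2)^2 := by
    have := Real.sin_sq_eq_half_sub (u/2)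
    rw [mul_div_cancel₀ u (two_ne_zero)] at this
    linarith
  rcases eq_or_ne u 0 with rfl | hu
  · simp
  · have h2 : Real.sin (u/2)^2 < (u/2)^2 := Real.sin_sq_lt_sq (by simpa using hu)
    rw [h]; nlinarith

lemma one_sub_cos_nonneg (u : ℝ) : 0 ≤ 1 - Real.cos u := by
  have := Real.cos_le_one u; linarith

lemma one_sub_cos_le_two (u : ℝ) : 1 - Real.cos u ≤ 2 := by
  have := Real.neg_one_le_cos u; linarith

lemma cos_one_lt : Real.cos 1 < 1 := by
  have h := Real.cos_le_one_sub_mul_cos_sq (x := 1) (by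
    rw [abs_one]; linarith [Real.pi_gt_three])
  have hπ : (0:ℝ) < π := Real.pi_pos
  have : 0 < 2 / π^2 := by positivity
  nlinarith

lemma contOn_rpow_Ioi (c : ℝ) {s : Set ℝ} (hs : s ⊆ Ioi 0) :
    ContinuousOn (fun u : ℝ => u ^ c) s :=
  fun x hx => (Real.continuousAt_rpow_const x c (Or.inl (ne_of_gt (hs hx)))).continuousWithinAt

lemma integrableOn_cosKer (r t : ℝ) (hr : 0 < r) (hr2 : r < 2) :
    IntegrableOn (fun u => (1 - Real.cos (t*u)) * u ^ (-1-r)) (Ioi (0:ℝ)) := by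
  have hmeas : ∀ s : Set ℝ, s ⊆ Ioi 0 → MeasurableSet s →
      AEStronglyMeasurable (fun u => (1 - Real.cos (t*u)) * u ^ (-1-r))
        (volume.restrict s) := by
    intro s hs hms
    exact (((continuous_const.sub ((Real.continuous_cos).comp
      (continuous_const.mul continuous_id))).continuousOn.mul
      (contOn_rpow_Ioi (-1-r) hs)).aestronglyMeasurable hms)
  rw [← Ioc_union_Ioi_eq_Ioi (zero_le_one (α := ℝ))]
  refine IntegrableOn.union ?_ ?_
  · refine Integrable.mono' (g := fun u => (t^2/2) * u ^ (1-r))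
      (((intervalIntegrable_iff_integrableOn_Ioc_of_le zero_le_one).mp
        (intervalIntegral.intervalIntegrable_rpow' (by linarith))).const_mul _)
      (hmeas _ Ioc_subset_Ioi_self measurableSet_Ioc) ?_
    rw [ae_restrict_iff' measurableSet_Ioc]
    filter_upwards with u hu
    have hu0 : 0 < u := hu.1
    have h1 : (0:ℝ) ≤ u ^ (-1-r) := Real.rpow_nonneg hu0.le _
    rw [Real.norm_eq_abs, abs_of_nonneg (mul_nonneg (one_sub_cos_nonneg _) h1)]
    have h2 : 1 - Real.cos (t*u) ≤ (t^2/2) * u^2 := by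
      have := one_sub_cos_le (t*u); nlinarith
    have h3 : (1 - Real.cos (t*u)) * u ^ (-1-r) ≤ ((t^2/2) * u^2) * u ^ (-1-r) :=
      mul_le_mul_of_nonneg_right h2 h1
    refine h3.trans (le_of_eq ?_)
    rw [mul_assoc, ← Real.rpow_natCast u 2, ← Real.rpow_add hu0,
      show ((2:ℕ):ℝ) + (-1 - r) = 1 - r by push_cast; ring]
  · refine Integrable.mono' (g := fun u => 2 * u ^ (-1-r))
      ((integrableOn_Ioi_rpow_of_lt (by linarith) one_pos).const_mul _)
      (hmeas _ (Ioi_subset_Ioi zero_le_one) measurableSet_Ioi) ?_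
    rw [ae_restrict_iff' measurableSet_Ioi]
    filter_upwards with u hu
    have hu0 : (0:ℝ) < u := lt_trans one_pos hu
    have h1 : (0:ℝ) ≤ u ^ (-1-r) := Real.rpow_nonneg hu0.le _
    rw [Real.norm_eq_abs, abs_of_nonneg (mul_nonneg (one_sub_cos_nonneg _) h1)]
    exact mul_le_mul_of_nonneg_right (one_sub_cos_le_two _) h1

noncomputable def cosConst (r : ℝ) : ℝ := ∫ u in Ioi (0:ℝ), (1 - Real.cos u) * u ^ (-1-r)

lemma cosConst_pos (r : ℝ) (hr : 0 < r) (hr2 : r < 2) : 0 < cosConst r := by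
  have hint : IntegrableOn (fun u => (1 - Real.cos u) * u ^ (-1-r)) (Ioi (0:ℝ)) := by
    simpa using integrableOn_cosKer r 1 hr hr2
  have hnonneg : ∀ u ∈ Ioi (0:ℝ), 0 ≤ (1 - Real.cos u) * u ^ (-1-r) := fun u hu =>
    mul_nonneg (one_sub_cos_nonneg _) (Real.rpow_nonneg (le_of_lt hu) _)
  have hsub : (Ioc (1:ℝ) 2) ⊆ Ioi 0 := fun u hu => lt_trans one_pos hu.1
  have hmono : ∫ u in Ioc (1:ℝ) 2, (1 - Real.cos u) * u ^ (-1-r)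
      ≤ ∫ u in Ioi (0:ℝ), (1 - Real.cos u) * u ^ (-1-r) := by
    refine setIntegral_mono_set hint
      ((ae_restrict_iff' measurableSet_Ioi).mpr (Filter.Eventually.of_forall hnonneg))
      (HasSubset.Subset.eventuallyLE hsub)
  have h0 : Real.cos 1 < 1 := cos_one_lt
  have h0' : (0:ℝ) < 1 - Real.cos 1 := by linarith
  have hc : 0 < (1 - Real.cos 1) * (2:ℝ) ^ (-1-r) := by positivity
  have hlow : (1 - Real.cos 1) * (2:ℝ) ^ (-1-r) * (volume (Ioc (1:ℝ) 2)).toReal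
      ≤ ∫ u in Ioc (1:ℝ) 2, (1 - Real.cos u) * u ^ (-1-r) := by
    refine setIntegral_ge_of_const_le_real measurableSet_Ioc (by simp) ?_
      (hint.mono_set hsub)
    intro u hu
    have hu1 : (1:ℝ) ≤ u := le_of_lt hu.1
    have hcos : Real.cos u ≤ Real.cos 1 := by
      refine Real.cos_le_cos_of_nonneg_of_le_pi zero_le_one ?_ hu1
      have := Real.pi_gt_three; linarith [hu.2]
    have h1 : 1 - Real.cos 1 ≤ 1 - Real.cos u := by linarith
    have h2 : (2:ℝ) ^ (-1-r) ≤ u ^ (-1-r) :=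
      Real.rpow_le_rpow_of_nonpos (lt_of_lt_of_le one_pos hu1) hu.2 (by linarith)
    exact mul_le_mul h1 h2 (Real.rpow_nonneg (by norm_num) _) (by linarith [one_sub_cos_nonneg u])
  have hvol : (volume (Ioc (1:ℝ) 2)).toReal = 1 := by
    rw [Real.volume_Ioc]; norm_num
  rw [hvol, mul_one] at hlow
  exact lt_of_lt_of_le hc (hlow.trans hmono)

lemma cos_integral_eq (r : ℝ) (hr : 0 < r) (hr2 : r < 2) (t : ℝ) (ht : 0 ≤ t) :
    ∫ u in Ioi (0:ℝ), (1 - Real.cos (t*u)) * u ^ (-1-r) = t ^ r * cosConst r := by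
  rcases eq_or_lt_of_le ht with rfl | ht'
  · simp [Real.zero_rpow (ne_of_gt hr)]
  · have key : ∀ u ∈ Ioi (0:ℝ), (1 - Real.cos (t*u)) * u ^ (-1-r)
        = t ^ (1+r) * ((1 - Real.cos (t*u)) * (t*u) ^ (-1-r)) := by
      intro u hu
      rw [Real.mul_rpow ht (le_of_lt hu)]
      have htt : t ^ (1+r) * t ^ (-1-r) = 1 := by
        rw [← Real.rpow_add ht', show (1+r)+(-1-r) = 0 by ring, Real.rpow_zero]
      linear_combination (-((1 - Real.cos (t*u)) * u ^ (-1-r))) * htt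
    rw [setIntegral_congr_fun measurableSet_Ioi key, MeasureTheory.integral_const_mul]
    have := MeasureTheory.integral_comp_mul_left_Ioi
      (fun v => (1 - Real.cos v) * v ^ (-1-r)) 0 ht'
    simp only [mul_zero] at this
    rw [this, smul_eq_mul, ← mul_assoc, ← cosConst]
    congr 1
    rw [← Real.rpow_neg_one t, ← Real.rpow_add ht', show 1 + r + (-1) = r by ring]

lemma one_sub_exp_neg_le (y : ℝ) : 1 - Real.exp (-y) ≤ y := by
  have := Real.add_one_le_exp (-y); linarith

lemma one_sub_exp_neg_nonneg {y : ℝ} (hy : 0 ≤ y) : 0 ≤ 1 - Real.exp (-y) := by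
  have : Real.exp (-y) ≤ 1 := Real.exp_le_one_iff.mpr (by linarith)
  linarith

lemma one_sub_exp_neg_le_one (y : ℝ) : 1 - Real.exp (-y) ≤ 1 := by
  have := Real.exp_pos (-y); linarith

lemma integrableOn_expKer (b x : ℝ) (hb : 0 < b) (hb1 : b < 1) (hx : 0 ≤ x) :
    IntegrableOn (fun u => (1 - Real.exp (-(x*u))) * u ^ (-1-b)) (Ioi (0:ℝ)) := by
  have hmeas : ∀ s : Set ℝ, s ⊆ Ioi 0 → MeasurableSet s →
      AEStronglyMeasurable (fun u => (1 - Real.exp (-(x*u))) * u ^ (-1-b))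
        (volume.restrict s) := by
    intro s hs hms
    exact (((continuous_const.sub ((Real.continuous_exp).comp
      (continuous_const.mul continuous_id).neg)).continuousOn.mul
      (contOn_rpow_Ioi (-1-b) hs)).aestronglyMeasurable hms)
  rw [← Ioc_union_Ioi_eq_Ioi (zero_le_one (α := ℝ))]
  refine IntegrableOn.union ?_ ?_
  · refine Integrable.mono' (g := fun u => x * u ^ (-b))
      (((intervalIntegrable_iff_integrableOn_Ioc_of_le zero_le_one).mp
        (intervalIntegral.intervalIntegrable_rpow' (by linarith))).const_mul _)
      (hmeas _ Ioc_subset_Ioi_self measurableSet_Ioc) ?_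
    rw [ae_restrict_iff' measurableSet_Ioc]
    filter_upwards with u hu
    have hu0 : 0 < u := hu.1
    have hxu : 0 ≤ x * u := mul_nonneg hx hu0.le
    have h1 : (0:ℝ) ≤ u ^ (-1-b) := Real.rpow_nonneg hu0.le _
    rw [Real.norm_eq_abs, abs_of_nonneg (mul_nonneg (one_sub_exp_neg_nonneg hxu) h1)]
    have h3 : (1 - Real.exp (-(x*u))) * u ^ (-1-b) ≤ (x * u) * u ^ (-1-b) :=
      mul_le_mul_of_nonneg_right (one_sub_exp_neg_le _) h1
    refine h3.trans (le_of_eq ?_)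
    rw [mul_assoc]
    congr 1
    rw [show u * u ^ (-1-b) = u ^ (1:ℝ) * u ^ (-1-b) by rw [Real.rpow_one],
      ← Real.rpow_add hu0, show (1:ℝ) + (-1-b) = -b by ring]
  · refine Integrable.mono' (g := fun u => u ^ (-1-b))
      (integrableOn_Ioi_rpow_of_lt (by linarith) one_pos)
      (hmeas _ (Ioi_subset_Ioi zero_le_one) measurableSet_Ioi) ?_
    rw [ae_restrict_iff' measurableSet_Ioi]
    filter_upwards with u hu
    have hu0 : (0:ℝ) < u := lt_trans one_pos hu
    have hxu : 0 ≤ x * u := mul_nonneg hx hu0.le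
    have h1 : (0:ℝ) ≤ u ^ (-1-b) := Real.rpow_nonneg hu0.le _
    rw [Real.norm_eq_abs, abs_of_nonneg (mul_nonneg (one_sub_exp_neg_nonneg hxu) h1)]
    nlinarith [one_sub_exp_neg_le_one (x*u)]

noncomputable def expConst (b : ℝ) : ℝ := ∫ u in Ioi (0:ℝ), (1 - Real.exp (-u)) * u ^ (-1-b)

lemma expConst_pos (b : ℝ) (hb : 0 < b) (hb1 : b < 1) : 0 < expConst b := by
  have hint : IntegrableOn (fun u => (1 - Real.exp (-u)) * u ^ (-1-b)) (Ioi (0:ℝ)) := by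
    have := integrableOn_expKer b 1 hb hb1 zero_le_one
    simpa using this
  have hnonneg : ∀ u ∈ Ioi (0:ℝ), 0 ≤ (1 - Real.exp (-u)) * u ^ (-1-b) := fun u hu =>
    mul_nonneg (one_sub_exp_neg_nonneg (le_of_lt hu)) (Real.rpow_nonneg (le_of_lt hu) _)
  have hsub : (Ioc (1:ℝ) 2) ⊆ Ioi 0 := fun u hu => lt_trans one_pos hu.1
  have hmono : ∫ u in Ioc (1:ℝ) 2, (1 - Real.exp (-u)) * u ^ (-1-b)
      ≤ ∫ u in Ioi (0:ℝ), (1 - Real.exp (-u)) * u ^ (-1-b) :=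
    setIntegral_mono_set hint
      ((ae_restrict_iff' measurableSet_Ioi).mpr (Filter.Eventually.of_forall hnonneg))
      (HasSubset.Subset.eventuallyLE hsub)
  have h0' : (0:ℝ) < 1 - Real.exp (-1) := by
    have : Real.exp (-1) < 1 := Real.exp_lt_one_iff.mpr (by norm_num)
    linarith
  have hc : 0 < (1 - Real.exp (-1)) * (2:ℝ) ^ (-1-b) := by positivity
  have hlow : (1 - Real.exp (-1)) * (2:ℝ) ^ (-1-b) * (volume (Ioc (1:ℝ) 2)).toReal
      ≤ ∫ u in Ioc (1:ℝ) 2, (1 - Real.exp (-u)) * u ^ (-1-b) := by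
    refine setIntegral_ge_of_const_le_real measurableSet_Ioc (by simp) ?_ (hint.mono_set hsub)
    intro u hu
    have hu1 : (1:ℝ) ≤ u := le_of_lt hu.1
    have hexp : Real.exp (-u) ≤ Real.exp (-1) := Real.exp_le_exp.mpr (by linarith)
    have h2 : (2:ℝ) ^ (-1-b) ≤ u ^ (-1-b) :=
      Real.rpow_le_rpow_of_nonpos (lt_of_lt_of_le one_pos hu1) hu.2 (by linarith)
    exact mul_le_mul (by linarith) h2 (Real.rpow_nonneg (by norm_num) _)
      (by linarith [one_sub_exp_neg_nonneg (show (0:ℝ) ≤ u by linarith)])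
  have hvol : (volume (Ioc (1:ℝ) 2)).toReal = 1 := by
    rw [Real.volume_Ioc]; norm_num
  rw [hvol, mul_one] at hlow
  exact lt_of_lt_of_le hc (hlow.trans hmono)

lemma exp_integral_eq (b : ℝ) (hb : 0 < b) (hb1 : b < 1) (x : ℝ) (hx : 0 ≤ x) :
    ∫ u in Ioi (0:ℝ), (1 - Real.exp (-(x*u))) * u ^ (-1-b) = x ^ b * expConst b := by
  rcases eq_or_lt_of_le hx with rfl | hx'
  · simp [Real.zero_rpow (ne_of_gt hb)]
  · have key : ∀ u ∈ Ioi (0:ℝ), (1 - Real.exp (-(x*u))) * u ^ (-1-b)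
        = x ^ (1+b) * ((1 - Real.exp (-(x*u))) * (x*u) ^ (-1-b)) := by
      intro u hu
      rw [Real.mul_rpow hx (le_of_lt hu)]
      have htt : x ^ (1+b) * x ^ (-1-b) = 1 := by
        rw [← Real.rpow_add hx', show (1+b)+(-1-b) = 0 by ring, Real.rpow_zero]
      linear_combination (-((1 - Real.exp (-(x*u))) * u ^ (-1-b))) * htt
    rw [setIntegral_congr_fun measurableSet_Ioi key, MeasureTheory.integral_const_mul]
    have := MeasureTheory.integral_comp_mul_left_Ioi
      (fun v => (1 - Real.exp (-v)) * v ^ (-1-b)) 0 hx'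
    simp only [mul_zero] at this
    rw [this, smul_eq_mul, ← mul_assoc, ← expConst]
    congr 1
    rw [← Real.rpow_neg_one x, ← Real.rpow_add hx', show 1 + b + (-1) = b by ring]

lemma qf_one_sub {n : ℕ} (a : Fin n → ℝ) (g : Fin n → Fin n → ℝ) (w : ℝ) :
    ∑ i, ∑ j, a i * a j * ((1 - g i j) * w)
      = w * ((∑ i, a i) * (∑ j, a j)) - w * ∑ i, ∑ j, a i * a j * g i j := by
  rw [Finset.sum_mul_sum, Finset.mul_sum, Finset.mul_sum, ← Finset.sum_sub_distrib]
  refine Finset.sum_congr rfl fun i _ => ?_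
  rw [Finset.mul_sum, Finset.mul_sum, ← Finset.sum_sub_distrib]
  exact Finset.sum_congr rfl fun j _ => by ring

lemma negtype_abs_rpow {n : ℕ} (r : ℝ) (hr : 0 < r) (hr2 : r ≤ 2)
    (x a : Fin n → ℝ) (ha : ∑ i, a i = 0) :
    ∑ i, ∑ j, a i * a j * |x i - x j| ^ r ≤ 0 := by
  rcases eq_or_lt_of_le hr2 with rfl | hr2'
  · have : ∀ i j, |x i - x j| ^ (2:ℝ) = (x i - x j)^2 := fun i j => by
      rw [Real.rpow_two, sq_abs]
    simp_rw [this]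
    exact qf_sq x a ha
  · have hC := cosConst_pos r hr hr2'
    set Q := ∑ i, ∑ j, a i * a j * |x i - x j| ^ r with hQ
    have hrep : ∀ i j : Fin n, |x i - x j| ^ r * cosConst r
        = ∫ u in Ioi (0:ℝ), (1 - Real.cos ((x i - x j)*u)) * u ^ (-1-r) := by
      intro i j
      rw [← cos_integral_eq r hr hr2' |x i - x j| (abs_nonneg _)]
      refine setIntegral_congr_fun measurableSet_Ioi fun u hu => ?_
      rcases abs_cases (x i - x j) with ⟨h1, _⟩ | ⟨h1, _⟩
      · rw [h1]
      · rw [h1, neg_mul, Real.cos_neg]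
    have hswap : Q * cosConst r
        = ∫ u in Ioi (0:ℝ), ∑ i, ∑ j,
            a i * a j * ((1 - Real.cos ((x i - x j)*u)) * u ^ (-1-r)) := by
      rw [MeasureTheory.integral_finset_sum]
      · rw [hQ, Finset.sum_mul]
        refine Finset.sum_congr rfl fun i _ => ?_
        rw [MeasureTheory.integral_finset_sum, Finset.sum_mul]
        · refine Finset.sum_congr rfl fun j _ => ?_
          rw [mul_assoc, hrep i j, ← MeasureTheory.integral_const_mul]
        · exact fun j _ => (integrableOn_cosKer r (x i - x j) hr hr2').const_mul _
      · intro i _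
        exact integrable_finset_sum _
          (fun j _ => (integrableOn_cosKer r (x i - x j) hr hr2').const_mul _)
    have hle : Q * cosConst r ≤ 0 := by
      rw [hswap]
      refine MeasureTheory.integral_nonpos_of_ae ?_
      rw [Filter.EventuallyLE, ae_restrict_iff' measurableSet_Ioi]
      filter_upwards with u hu
      have := qf_cos (fun i => x i * u) a
      have he : ∑ i, ∑ j, a i * a j * ((1 - Real.cos ((x i - x j)*u)) * u ^ (-1-r))
          = u ^ (-1-r) * ((∑ i, a i) * (∑ j, a j))
            - u ^ (-1-r) * ∑ i, ∑ j, a i * a j * Real.cos (x i * u - x j * u) := by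
        rw [← qf_one_sub a (fun i j => Real.cos (x i * u - x j * u)) (u ^ (-1-r))]
        refine Finset.sum_congr rfl fun i _ => Finset.sum_congr rfl fun j _ => ?_
        rw [sub_mul, one_mul, sub_mul]; ring_nf
      simp only [Pi.zero_apply]
      rw [he, ha]
      have hw : (0:ℝ) ≤ u ^ (-1-r) := Real.rpow_nonneg (le_of_lt hu) _
      nlinarith
    nlinarith


lemma psd_pow_inner {n m : ℕ} (b : Fin n → Fin m → ℝ) (c : Fin n → ℝ) (N : ℕ) :
    0 ≤ ∑ i, ∑ j, c i * c j * (∑ k, b i k * b j k) ^ N := by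
  classical
  have key : ∀ i j : Fin n, (∑ k, b i k * b j k) ^ N
      = ∑ f ∈ Fintype.piFinset (fun _ : Fin N => (Finset.univ : Finset (Fin m))),
          (∏ t, b i (f t)) * (∏ t, b j (f t)) := by
    intro i j
    calc (∑ k, b i k * b j k) ^ N
        = ∏ _t : Fin N, (∑ k, b i k * b j k) := by
          rw [Finset.prod_const, Finset.card_univ, Fintype.card_fin]
      _ = ∑ f ∈ Fintype.piFinset (fun _ : Fin N => (Finset.univ : Finset (Fin m))),
            ∏ t, (b i (f t) * b j (f t)) := Finset.prod_univ_sum _ _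
      _ = _ := Finset.sum_congr rfl fun f _ => Finset.prod_mul_distrib
  simp_rw [key, Finset.mul_sum]
  have e : ∑ i, ∑ j, ∑ f ∈ Fintype.piFinset (fun _ : Fin N => (Finset.univ : Finset (Fin m))),
        c i * c j * ((∏ t, b i (f t)) * ∏ t, b j (f t))
      = ∑ f ∈ Fintype.piFinset (fun _ : Fin N => (Finset.univ : Finset (Fin m))),
          (∑ i, c i * ∏ t, b i (f t))^2 := by
    calc ∑ i, ∑ j, ∑ f ∈ Fintype.piFinset (fun _ : Fin N => (Finset.univ : Finset (Fin m))),
          c i * c j * ((∏ t, b i (f t)) * ∏ t, b j (f t))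
        = ∑ i, ∑ f ∈ Fintype.piFinset (fun _ : Fin N => (Finset.univ : Finset (Fin m))),
            ∑ j, c i * c j * ((∏ t, b i (f t)) * ∏ t, b j (f t)) :=
          Finset.sum_congr rfl fun i _ => Finset.sum_comm
      _ = ∑ f ∈ Fintype.piFinset (fun _ : Fin N => (Finset.univ : Finset (Fin m))),
            ∑ i, ∑ j, c i * c j * ((∏ t, b i (f t)) * ∏ t, b j (f t)) := Finset.sum_comm
      _ = _ := by
          refine Finset.sum_congr rfl fun f _ => ?_
          rw [sq, Finset.sum_mul_sum]
          exact Finset.sum_congr rfl fun i _ => Finset.sum_congr rfl fun j _ => by ring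
  rw [e]
  positivity

lemma exists_gram {n : ℕ} (K : Fin n → Fin n → ℝ) (hsym : ∀ i j, K i j = K j i)
    (hpsd : ∀ c : Fin n → ℝ, 0 ≤ ∑ i, ∑ j, c i * c j * K i j) :
    ∃ b : Fin n → Fin n → ℝ, ∀ i j, K i j = ∑ k, b i k * b j k := by
  classical
  set A : Matrix (Fin n) (Fin n) ℝ := Matrix.of K with hA
  have hApsd : A.PosSemidef := by
    refine Matrix.PosSemidef.of_dotProduct_mulVec_nonneg ?_ ?_
    · ext i j
      simp [Matrix.conjTranspose_apply, hA, hsym j i]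
    · intro x
      have : (dotProduct (star x) (A.mulVec x)) = ∑ i, ∑ j, x i * x j * K i j := by
        simp only [dotProduct, Matrix.mulVec, dotProduct, star_trivial]
        exact Finset.sum_congr rfl fun i _ => by
          rw [Finset.mul_sum]
          exact Finset.sum_congr rfl fun j _ => by simp [hA]; ring
      rw [this]
      exact hpsd x
  open scoped MatrixOrder Matrix.Norms.L2Operator in
  obtain ⟨B, hB⟩ := CStarAlgebra.nonneg_iff_eq_star_mul_self.mp hApsd.nonneg
  refine ⟨fun i k => B k i, fun i j => ?_⟩
  have := congrArg (fun M => M i j) hB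
  simpa [Matrix.mul_apply, hA, Matrix.conjTranspose_apply, Matrix.star_eq_conjTranspose] using this

lemma psd_exp_gram {n m : ℕ} (b : Fin n → Fin m → ℝ) (c : Fin n → ℝ) :
    0 ≤ ∑ i, ∑ j, c i * c j * Real.exp (∑ k, b i k * b j k) := by
  have hexp : ∀ x : ℝ, Real.exp x = ∑' N : ℕ, x ^ N / N.factorial := fun x => by
    rw [Real.exp_eq_exp_ℝ, NormedSpace.exp_eq_tsum_div]
  have hsummable : ∀ i j : Fin n, Summable
      (fun N : ℕ => c i * c j * ((∑ k, b i k * b j k) ^ N / N.factorial)) := fun i j =>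
    (Real.summable_pow_div_factorial _).mul_left _
  have e : ∑ i, ∑ j, c i * c j * Real.exp (∑ k, b i k * b j k)
      = ∑' N : ℕ, ∑ i, ∑ j, c i * c j * ((∑ k, b i k * b j k) ^ N / N.factorial) := by
    rw [Summable.tsum_finsetSum (fun i _ => summable_sum (fun j _ => hsummable i j))]
    refine Finset.sum_congr rfl fun i _ => ?_
    rw [Summable.tsum_finsetSum (fun j _ => hsummable i j)]
    refine Finset.sum_congr rfl fun j _ => ?_
    rw [hexp, ← tsum_mul_left]
  rw [e]
  refine tsum_nonneg fun N => ?_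
  have e2 : ∑ i, ∑ j, c i * c j * ((∑ k, b i k * b j k) ^ N / N.factorial)
      = (1 / N.factorial) * ∑ i, ∑ j, c i * c j * (∑ k, b i k * b j k) ^ N := by
    rw [Finset.mul_sum]
    refine Finset.sum_congr rfl fun i _ => ?_
    rw [Finset.mul_sum]
    exact Finset.sum_congr rfl fun j _ => by ring
  rw [e2]
  exact mul_nonneg (by positivity) (psd_pow_inner b c N)

lemma pick_zero {m : ℕ} (T : ℝ) (F : Fin (m+1) → ℝ) :
    ∑ i, (if i = 0 then T else 0) * F i = T * F 0 := by
  classical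
  simp only [ite_mul, zero_mul]
  rw [Finset.sum_ite_eq' Finset.univ (0 : Fin (m+1)) (fun i => T * F i)]
  simp

lemma psd_exp_neg_of_negtype {n : ℕ} (K : Fin n → Fin n → ℝ)
    (hsym : ∀ i j, K i j = K j i) (hdiag : ∀ i, K i i = 0)
    (hneg : ∀ a : Fin n → ℝ, ∑ i, a i = 0 → ∑ i, ∑ j, a i * a j * K i j ≤ 0)
    (t : ℝ) (ht : 0 ≤ t) (c : Fin n → ℝ) :
    0 ≤ ∑ i, ∑ j, c i * c j * Real.exp (-(t * K i j)) := by
  classical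
  cases n with
  | zero => simp
  | succ m =>
    set G : Fin (m+1) → Fin (m+1) → ℝ := fun i j => t * (K i 0 + K 0 j - K i j) with hG
    have hGsym : ∀ i j, G i j = G j i := fun i j => by
      simp only [hG, hsym i 0, hsym 0 j, hsym i j]; ring
    have hGpsd : ∀ d : Fin (m+1) → ℝ, 0 ≤ ∑ i, ∑ j, d i * d j * G i j := by
      intro d
      set T := ∑ k, d k with hT
      set S := ∑ i, d i * K i 0 with hS
      have hS' : ∑ j, d j * K 0 j = S := by
        rw [hS]; exact Finset.sum_congr rfl fun j _ => by rw [hsym 0 j]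
      have hsum_a : ∑ i : Fin (m+1), (d i - if i = 0 then T else 0) = 0 := by
        simp only [Finset.sum_sub_distrib,
          Finset.sum_ite_eq' Finset.univ (0 : Fin (m+1)) (fun _ => T)]
        simp [hT]
      -- the four pieces of the expansion of the quadratic form at `a`
      have hA : ∑ i : Fin (m+1), ∑ j, (if i = 0 then T else 0) * (d j * K i j)
          = T * S := by
        rw [Finset.sum_comm]
        calc ∑ j : Fin (m+1), ∑ i, (if i = 0 then T else 0) * (d j * K i j)
            = ∑ j : Fin (m+1), T * (d j * K 0 j) :=
              Finset.sum_congr rfl fun j _ => pick_zero T _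
          _ = T * ∑ j, d j * K 0 j := by rw [Finset.mul_sum]
          _ = T * S := by rw [hS']
      have hB : ∑ i : Fin (m+1), ∑ j, (d i * K i j) * (if j = 0 then T else 0)
          = S * T := by
        calc ∑ i : Fin (m+1), ∑ j, (d i * K i j) * (if j = 0 then T else 0)
            = ∑ i : Fin (m+1), T * (d i * K i 0) := by
              refine Finset.sum_congr rfl fun i _ => ?_
              rw [← pick_zero T (fun j => d i * K i j)]
              exact Finset.sum_congr rfl fun j _ => by ring
          _ = T * S := by rw [hS, Finset.mul_sum]
          _ = S * T := by ring
      have hC : ∑ i : Fin (m+1), ∑ j, (if i = 0 then T else 0)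
            * ((if j = 0 then T else 0) * K i j) = 0 := by
        calc ∑ i : Fin (m+1), ∑ j, (if i = 0 then T else 0) * ((if j = 0 then T else 0) * K i j)
            = ∑ i : Fin (m+1), (if i = 0 then T else 0) * (T * K i 0) :=
              Finset.sum_congr rfl fun i _ => by
                rw [← Finset.mul_sum, pick_zero T (fun j => K i j)]
          _ = T * (T * K 0 0) := pick_zero T _
          _ = 0 := by rw [hdiag]; ring
      have key : ∀ i j : Fin (m+1),
          (d i - if i = 0 then T else 0) * (d j - if j = 0 then T else 0) * K i j
          = d i * d j * K i j - (if i = 0 then T else 0) * (d j * K i j)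
            - (d i * K i j) * (if j = 0 then T else 0)
            + (if i = 0 then T else 0) * ((if j = 0 then T else 0) * K i j) :=
        fun i j => by ring
      have hQa := hneg (fun i => d i - if i = 0 then T else 0) hsum_a
      have expand : ∑ i : Fin (m+1), ∑ j,
            (d i - if i = 0 then T else 0) * (d j - if j = 0 then T else 0) * K i j
          = ∑ i, ∑ j, d i * d j * K i j - 2 * (S * T) := by
        simp_rw [key, Finset.sum_add_distrib, Finset.sum_sub_distrib]
        rw [hA, hB, hC]; ring
      rw [expand] at hQa
      -- now compute the G-quadratic form
      have e1 : ∑ i : Fin (m+1), ∑ j, d i * d j * K i 0 = S * T := by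
        calc ∑ i : Fin (m+1), ∑ j, d i * d j * K i 0
            = ∑ i : Fin (m+1), (d i * K i 0) * T := by
              refine Finset.sum_congr rfl fun i _ => ?_
              rw [hT, Finset.mul_sum]
              exact Finset.sum_congr rfl fun j _ => by ring
          _ = S * T := by rw [← Finset.sum_mul, hS]
      have e2 : ∑ i : Fin (m+1), ∑ j, d i * d j * K 0 j = S * T := by
        rw [Finset.sum_comm]
        calc ∑ j : Fin (m+1), ∑ i, d i * d j * K 0 j
            = ∑ j : Fin (m+1), (d j * K 0 j) * T := by
              refine Finset.sum_congr rfl fun j _ => ?_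
              rw [hT, Finset.mul_sum]
              exact Finset.sum_congr rfl fun i _ => by ring
          _ = S * T := by rw [← Finset.sum_mul, hS']
      have eG : ∑ i, ∑ j, d i * d j * G i j
          = t * (2 * (S * T) - ∑ i, ∑ j, d i * d j * K i j) := by
        have : ∀ i j : Fin (m+1), d i * d j * G i j
            = t * (d i * d j * K i 0) + t * (d i * d j * K 0 j)
              - t * (d i * d j * K i j) := fun i j => by simp only [hG]; ring
        simp_rw [this, Finset.sum_sub_distrib, Finset.sum_add_distrib, ← Finset.mul_sum]
        rw [e1, e2]; ring
      rw [eG]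
      nlinarith
    obtain ⟨b, hb⟩ := exists_gram G hGsym hGpsd
    have hsplit : ∀ i j : Fin (m+1), Real.exp (-(t * K i j))
        = Real.exp (-(t * K i 0)) * Real.exp (-(t * K j 0)) * Real.exp (G i j) := by
      intro i j
      rw [← Real.exp_add, ← Real.exp_add]
      congr 1
      simp only [hG, hsym 0 j]
      ring
    calc (0:ℝ) ≤ ∑ i, ∑ j, (c i * Real.exp (-(t * K i 0))) * (c j * Real.exp (-(t * K j 0)))
          * Real.exp (∑ k, b i k * b j k) := psd_exp_gram b _
      _ = ∑ i, ∑ j, c i * c j * Real.exp (-(t * K i j)) := by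
          refine Finset.sum_congr rfl fun i _ => Finset.sum_congr rfl fun j _ => ?_
          rw [hsplit i j, ← hb i j]
          ring

lemma negtype_rpow {n : ℕ} (K : Fin n → Fin n → ℝ)
    (hsym : ∀ i j, K i j = K j i) (hdiag : ∀ i, K i i = 0)
    (hnonneg : ∀ i j, 0 ≤ K i j)
    (hneg : ∀ a : Fin n → ℝ, ∑ i, a i = 0 → ∑ i, ∑ j, a i * a j * K i j ≤ 0)
    (b : ℝ) (hb : 0 < b) (hb1 : b ≤ 1)
    (a : Fin n → ℝ) (ha : ∑ i, a i = 0) :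
    ∑ i, ∑ j, a i * a j * K i j ^ b ≤ 0 := by
  rcases eq_or_lt_of_le hb1 with rfl | hb1'
  · simp_rw [Real.rpow_one]
    exact hneg a ha
  · have hC := expConst_pos b hb hb1'
    set Q := ∑ i, ∑ j, a i * a j * K i j ^ b with hQ
    have hrep : ∀ i j : Fin n, K i j ^ b * expConst b
        = ∫ u in Ioi (0:ℝ), (1 - Real.exp (-(K i j * u))) * u ^ (-1-b) :=
      fun i j => (exp_integral_eq b hb hb1' (K i j) (hnonneg i j)).symm
    have hswap : Q * expConst b
        = ∫ u in Ioi (0:ℝ), ∑ i, ∑ j,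
            a i * a j * ((1 - Real.exp (-(K i j * u))) * u ^ (-1-b)) := by
      rw [MeasureTheory.integral_finset_sum]
      · rw [hQ, Finset.sum_mul]
        refine Finset.sum_congr rfl fun i _ => ?_
        rw [MeasureTheory.integral_finset_sum, Finset.sum_mul]
        · refine Finset.sum_congr rfl fun j _ => ?_
          rw [mul_assoc, hrep i j, ← MeasureTheory.integral_const_mul]
        · exact fun j _ => (integrableOn_expKer b (K i j) hb hb1' (hnonneg i j)).const_mul _
      · intro i _
        exact integrable_finset_sum _
          (fun j _ => (integrableOn_expKer b (K i j) hb hb1' (hnonneg i j)).const_mul _)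
    have hle : Q * expConst b ≤ 0 := by
      rw [hswap]
      refine MeasureTheory.integral_nonpos_of_ae ?_
      rw [Filter.EventuallyLE, ae_restrict_iff' measurableSet_Ioi]
      filter_upwards with u hu
      have hpsd : 0 ≤ ∑ i, ∑ j, a i * a j * Real.exp (-(u * K i j)) :=
        psd_exp_neg_of_negtype K hsym hdiag hneg u (le_of_lt hu) a
      have he : ∑ i, ∑ j, a i * a j * ((1 - Real.exp (-(K i j * u))) * u ^ (-1-b))
          = u ^ (-1-b) * ((∑ i, a i) * (∑ j, a j))
            - u ^ (-1-b) * ∑ i, ∑ j, a i * a j * Real.exp (-(u * K i j)) := by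
        rw [← qf_one_sub a (fun i j => Real.exp (-(u * K i j))) (u ^ (-1-b))]
        refine Finset.sum_congr rfl fun i _ => Finset.sum_congr rfl fun j _ => ?_
        rw [mul_comm (K i j) u]
      simp only [Pi.zero_apply]
      rw [he, ha]
      have hw : (0:ℝ) ≤ u ^ (-1-b) := Real.rpow_nonneg (le_of_lt hu) _
      nlinarith
    nlinarith

/-- Number of coordinates at level index `j`: index `0` encodes the paper's level `−1`
(one coordinate), and index `j ≥ 1` encodes the paper's level `j − 1` (with `2^(j−1)`
coordinates). -/
def levelSize : ℕ → ℕ := fun j => if j = 0 then 1 else 2 ^ (j - 1)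

/-- The paper's level corresponding to index `j`, as a real number (so index `0`
gives level `−1`). -/
noncomputable def levelIdx (j : ℕ) : ℝ := (j : ℝ) - 1

/-- A Besov coefficient sequence `θ = (θ_{j,k})`. -/
abbrev BesovSeq := (j : ℕ) → Fin (levelSize j) → ℝ

/-- The `ℓ_p` norm of the level-`j` block. -/
noncomputable def levelNormP (p : ℝ) {j : ℕ} (v : Fin (levelSize j) → ℝ) : ℝ :=
  (∑ k, |v k| ^ p) ^ (1 / p)

/-- The level-`j` summand `2^{jsq} ‖θ_j‖_p^q` of the `q`-th power of the Besov
sequence norm, where `s = α + 1/2 − 1/p`. -/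
noncomputable def besovSummand (p q s : ℝ) (θ : BesovSeq) (j : ℕ) : ℝ :=
  2 ^ (levelIdx j * s * q) * levelNormP p (θ j) ^ q

/-- The Besov sequence norm `‖θ‖_{b_{p,q}^α} = (∑_{j ≥ −1} 2^{jsq} ‖θ_j‖_p^q)^{1/q}`,
`s = α + 1/2 − 1/p`. -/
noncomputable def besovNorm (p q s : ℝ) (θ : BesovSeq) : ℝ :=
  (∑' j, besovSummand p q s θ j) ^ (1 / q)

/-- The semi-metric `ρ_{b_{p,q}^α}(θ, θ') = ‖θ − θ'‖_{b_{p,q}^α}^q`. -/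
noncomputable def besovRho (p q s : ℝ) (θ θ' : BesovSeq) : ℝ :=
  besovNorm p q s (fun j k => θ j k - θ' j k) ^ q

lemma levelNormP_nonneg (p : ℝ) {j : ℕ} (v : Fin (levelSize j) → ℝ) :
    0 ≤ levelNormP p v :=
  Real.rpow_nonneg (Finset.sum_nonneg fun k _ => Real.rpow_nonneg (abs_nonneg _) _) _

lemma besovSummand_nonneg (p q s : ℝ) (θ : BesovSeq) (j : ℕ) :
    0 ≤ besovSummand p q s θ j :=
  mul_nonneg (Real.rpow_nonneg (by norm_num) _)
    (Real.rpow_nonneg (levelNormP_nonneg p _) _)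

lemma besovRho_eq (p q s : ℝ) (hq : 0 < q) (θ θ' : BesovSeq) :
    besovRho p q s θ θ' = ∑' j, besovSummand p q s (fun j k => θ j k - θ' j k) j := by
  unfold besovRho besovNorm
  rw [← Real.rpow_mul (tsum_nonneg fun j => besovSummand_nonneg p q s _ j),
    one_div, inv_mul_cancel₀ (ne_of_gt hq), Real.rpow_one]

lemma besovSummand_eq (p q s : ℝ) (hp : 0 < p) (θ : BesovSeq) (j : ℕ) :
    besovSummand p q s θ j
      = 2 ^ (levelIdx j * s * q) * (∑ k, |θ j k| ^ p) ^ (q/p) := by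
  unfold besovSummand levelNormP
  rw [← Real.rpow_mul (Finset.sum_nonneg fun k _ => Real.rpow_nonneg (abs_nonneg _) _),
    show 1/p*q = q/p by ring]

lemma besovSummand_zero (p q s : ℝ) (hp : 0 < p) (hq : 0 < q) (j : ℕ) :
    besovSummand p q s (0 : BesovSeq) j = 0 := by
  unfold besovSummand levelNormP
  simp [Real.zero_rpow (ne_of_gt hp), Real.zero_rpow (ne_of_gt hq),
    Real.zero_rpow (show p⁻¹ ≠ 0 by positivity), one_div]

lemma besovRho_symm (p q s : ℝ) (θ θ' : BesovSeq) :
    besovRho p q s θ θ' = besovRho p q s θ' θ := by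
  unfold besovRho besovNorm
  congr 2
  refine tsum_congr fun j => ?_
  simp only [besovSummand, levelNormP]
  congr 3
  exact Finset.sum_congr rfl fun k _ => by rw [abs_sub_comm]

lemma besovRho_nonneg (p q s : ℝ) (θ θ' : BesovSeq) :
    0 ≤ besovRho p q s θ θ' :=
  Real.rpow_nonneg (Real.rpow_nonneg (tsum_nonneg
    fun j => besovSummand_nonneg p q s _ j) _) _

lemma besovRho_self (p q s : ℝ) (hp : 0 < p) (hq : 0 < q) (θ : BesovSeq) :
    besovRho p q s θ θ = 0 := by
  rw [besovRho_eq p q s hq]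
  have : (fun (j : ℕ) (k : Fin (levelSize j)) => θ j k - θ j k) = (0 : BesovSeq) := by
    funext j k; simp
  rw [this]
  simp [besovSummand_zero p q s hp hq]

lemma rpow_add_le_two_rpow (β : ℝ) (hβ : 0 ≤ β) {x y : ℝ} (hx : 0 ≤ x) (hy : 0 ≤ y) :
    (x + y) ^ β ≤ 2 ^ β * (x ^ β + y ^ β) := by
  have hmax : x + y ≤ 2 * max x y := by
    rcases le_total x y with h | h
    · rw [max_eq_right h]; linarith
    · rw [max_eq_left h]; linarith
  have h0 : (0:ℝ) ≤ max x y := le_trans hx (le_max_left x y)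
  calc (x+y)^β ≤ (2 * max x y)^β := Real.rpow_le_rpow (by linarith) hmax hβ
    _ = 2^β * (max x y)^β := Real.mul_rpow (by norm_num) h0
    _ ≤ 2^β * (x^β + y^β) := by
        refine mul_le_mul_of_nonneg_left ?_ (Real.rpow_nonneg (by norm_num) _)
        rcases le_total x y with h | h
        · rw [max_eq_right h]; nlinarith [Real.rpow_nonneg hx β]
        · rw [max_eq_left h]; nlinarith [Real.rpow_nonneg hy β]

lemma abs_sub_le_abs_add_abs (a b : ℝ) : |a - b| ≤ |a| + |b| := by
  calc |a - b| = |a + -b| := by rw [sub_eq_add_neg]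
    _ ≤ |a| + |-b| := abs_add_le _ _
    _ = |a| + |b| := by rw [abs_neg]

lemma summable_besov_diff (p q s : ℝ) (hp : 0 < p) (hq : 0 < q) (θ θ' : BesovSeq)
    (h1 : Summable (besovSummand p q s θ)) (h2 : Summable (besovSummand p q s θ')) :
    Summable (besovSummand p q s (fun j k => θ j k - θ' j k)) := by
  have hβ : (0:ℝ) < q/p := by positivity
  refine Summable.of_nonneg_of_le (fun j => besovSummand_nonneg p q s _ j)
    (fun j => ?_) (((h1.add h2).mul_left (2^q * 2^(q/p))))
  rw [besovSummand_eq p q s hp, besovSummand_eq p q s hp, besovSummand_eq p q s hp]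
  set w := (2:ℝ) ^ (levelIdx j * s * q) with hw
  have hw0 : (0:ℝ) ≤ w := Real.rpow_nonneg (by norm_num) _
  set Dd := ∑ k, |θ j k - θ' j k| ^ p with hDd
  set D1 := ∑ k, |θ j k| ^ p with hD1
  set D2 := ∑ k, |θ' j k| ^ p with hD2
  have hDd0 : 0 ≤ Dd := Finset.sum_nonneg fun k _ => Real.rpow_nonneg (abs_nonneg _) _
  have hD10 : 0 ≤ D1 := Finset.sum_nonneg fun k _ => Real.rpow_nonneg (abs_nonneg _) _
  have hD20 : 0 ≤ D2 := Finset.sum_nonneg fun k _ => Real.rpow_nonneg (abs_nonneg _) _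
  have hD : Dd ≤ 2^p * (D1 + D2) := by
    calc Dd ≤ ∑ k, 2^p * (|θ j k| ^ p + |θ' j k| ^ p) := by
          refine Finset.sum_le_sum fun k _ => ?_
          refine le_trans (Real.rpow_le_rpow (abs_nonneg _)
            (abs_sub_le_abs_add_abs (θ j k) (θ' j k)) (le_of_lt hp)) ?_
          exact rpow_add_le_two_rpow p (le_of_lt hp) (abs_nonneg _) (abs_nonneg _)
      _ = 2^p * (D1 + D2) := by
          rw [← Finset.mul_sum, Finset.sum_add_distrib]
  calc w * Dd ^ (q/p)
      ≤ w * (2^p * (D1 + D2)) ^ (q/p) :=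
        mul_le_mul_of_nonneg_left (Real.rpow_le_rpow hDd0 hD (le_of_lt hβ)) hw0
    _ = w * (2^q * (D1 + D2) ^ (q/p)) := by
        rw [Real.mul_rpow (by positivity) (by linarith), ← Real.rpow_mul (by norm_num : (0:ℝ) ≤ 2),
          show p * (q/p) = q by field_simp]
    _ ≤ w * (2^q * (2^(q/p) * (D1 ^ (q/p) + D2 ^ (q/p)))) := by
        refine mul_le_mul_of_nonneg_left (mul_le_mul_of_nonneg_left
          (rpow_add_le_two_rpow (q/p) (le_of_lt hβ) hD10 hD20) (by positivity)) hw0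
    _ = 2^q * 2^(q/p) * (w * D1 ^ (q/p) + w * D2 ^ (q/p)) := by ring

lemma negtype_besov_level {n M : ℕ} (p β : ℝ) (hp : 0 < p) (hp2 : p ≤ 2)
    (hβ : 0 < β) (hβ1 : β ≤ 1)
    (v : Fin n → Fin M → ℝ) (a : Fin n → ℝ) (ha : ∑ i, a i = 0) :
    ∑ i, ∑ j, a i * a j * (∑ k, |v i k - v j k| ^ p) ^ β ≤ 0 := by
  refine negtype_rpow (fun i j => ∑ k, |v i k - v j k| ^ p)
    (fun i j => Finset.sum_congr rfl fun k _ => by rw [abs_sub_comm])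
    (fun i => by simp [Real.zero_rpow (ne_of_gt hp)])
    (fun i j => Finset.sum_nonneg fun k _ => Real.rpow_nonneg (abs_nonneg _) _)
    ?_ β hβ hβ1 a ha
  intro aa haa
  have e : ∑ i, ∑ j, aa i * aa j * ∑ k, |v i k - v j k| ^ p
      = ∑ k, ∑ i, ∑ j, aa i * aa j * |v i k - v j k| ^ p := by
    simp_rw [Finset.mul_sum]
    calc ∑ i, ∑ j, ∑ k, aa i * aa j * |v i k - v j k| ^ p
        = ∑ i, ∑ k, ∑ j, aa i * aa j * |v i k - v j k| ^ p :=
          Finset.sum_congr rfl fun i _ => Finset.sum_comm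
      _ = ∑ k, ∑ i, ∑ j, aa i * aa j * |v i k - v j k| ^ p := Finset.sum_comm
  rw [e]
  exact Finset.sum_nonpos fun k _ => negtype_abs_rpow p hp hp2 (fun i => v i k) aa haa

set_option maxHeartbeats 1000000 in
/-- For `0 < q ≤ p ≤ 2` and `α > 0`, on the set of Besov coefficient
sequences with finite `b_{p,q}^α` norm, the function `ρ(θ,θ') = ‖θ − θ'‖_{b_{p,q}^α}^q`
is a semi-metric of negative type; consequently the induced kernel
`κ(θ,θ') = ρ(θ,0) + ρ(θ',0) − ρ(θ,θ')` is symmetric and positive definite. -/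
theorem besov_rho_negtype_and_kernel_posdef (p q α : ℝ)
    (hq : 0 < q) (hqp : q ≤ p) (hp2 : p ≤ 2) (hα : 0 < α) (s : ℝ)
    (hs : s = α + 1 / 2 - 1 / p) :
    -- semi-metric properties
    (∀ θ θ' : BesovSeq, besovRho p q s θ θ' = besovRho p q s θ' θ) ∧
    (∀ θ θ' : BesovSeq, 0 ≤ besovRho p q s θ θ') ∧
    (∀ θ : BesovSeq, besovRho p q s θ θ = 0) ∧
    -- negative type on sequences of finite Besov norm
    (∀ (n : ℕ), 2 ≤ n → ∀ (θ : Fin n → BesovSeq),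
      (∀ i, Summable (besovSummand p q s (θ i))) →
      ∀ (a : Fin n → ℝ), (∑ i, a i) = 0 →
        ∑ i, ∑ j, a i * a j * besovRho p q s (θ i) (θ j) ≤ 0) ∧
    -- induced kernel (base point: the zero sequence) is symmetric
    (∀ θ θ' : BesovSeq,
      besovRho p q s θ 0 + besovRho p q s θ' 0 - besovRho p q s θ θ' =
      besovRho p q s θ' 0 + besovRho p q s θ 0 - besovRho p q s θ' θ) ∧
    -- and positive definite on sequences of finite Besov norm
    (∀ (n : ℕ), 1 ≤ n → ∀ (θ : Fin n → BesovSeq),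
      (∀ i, Summable (besovSummand p q s (θ i))) →
      ∀ (c : Fin n → ℝ),
        0 ≤ ∑ i, ∑ j, c i * c j *
          (besovRho p q s (θ i) 0 + besovRho p q s (θ j) 0 -
            besovRho p q s (θ i) (θ j))) := by
  have hp : 0 < p := lt_of_lt_of_le hq hqp
  have hβ : 0 < q/p := by positivity
  have hβ1 : q/p ≤ 1 := (div_le_one hp).mpr hqp
  -- the negative-type statement, without the (unneeded) `2 ≤ n` hypothesis
  have hNT : ∀ (n : ℕ) (θ : Fin n → BesovSeq),
      (∀ i, Summable (besovSummand p q s (θ i))) →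
      ∀ (a : Fin n → ℝ), (∑ i, a i) = 0 →
        ∑ i, ∑ j, a i * a j * besovRho p q s (θ i) (θ j) ≤ 0 := by
    intro n θ hsum a ha
    have hsumdiff : ∀ i i' : Fin n,
        Summable (besovSummand p q s (fun j k => θ i j k - θ i' j k)) := fun i i' =>
      summable_besov_diff p q s hp hq _ _ (hsum i) (hsum i')
    have e : ∑ i, ∑ j, a i * a j * besovRho p q s (θ i) (θ j)
        = ∑' J, ∑ i, ∑ j, a i * a j
            * besovSummand p q s (fun l k => θ i l k - θ j l k) J := by
      simp_rw [besovRho_eq p q s hq, ← tsum_mul_left]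
      rw [Summable.tsum_finsetSum (fun i _ => summable_sum
        (fun j _ => (hsumdiff i j).mul_left (a i * a j)))]
      refine Finset.sum_congr rfl fun i _ => ?_
      rw [Summable.tsum_finsetSum (fun j _ => (hsumdiff i j).mul_left (a i * a j))]
    rw [e]
    refine tsum_nonpos fun J => ?_
    have e2 : ∑ i, ∑ j, a i * a j * besovSummand p q s (fun l k => θ i l k - θ j l k) J
        = 2 ^ (levelIdx J * s * q) * ∑ i, ∑ j, a i * a j
            * (∑ k, |θ i J k - θ j J k| ^ p) ^ (q/p) := by
      rw [Finset.mul_sum]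
      refine Finset.sum_congr rfl fun i _ => ?_
      rw [Finset.mul_sum]
      refine Finset.sum_congr rfl fun j _ => ?_
      rw [besovSummand_eq p q s hp]
      ring
    rw [e2]
    exact mul_nonpos_of_nonneg_of_nonpos (Real.rpow_nonneg (by norm_num) _)
      (negtype_besov_level p (q/p) hp hp2 hβ hβ1 (fun i => θ i J) a ha)
  refine ⟨fun θ θ' => besovRho_symm p q s θ θ',
    fun θ θ' => besovRho_nonneg p q s θ θ',
    fun θ => besovRho_self p q s hp hq θ,
    fun n _ θ hsum a ha => hNT n θ hsum a ha,
    fun θ θ' => by rw [besovRho_symm p q s θ θ']; ring, ?_⟩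
  -- positive definiteness of the induced kernel
  intro n hn θ hsum c
  set Sc := ∑ k, c k with hSc
  set A := ∑ i, c i * besovRho p q s (θ i) 0 with hA
  set P := ∑ i, ∑ j, c i * c j * besovRho p q s (θ i) (θ j) with hP
  have hθ0 : besovSummand p q s (0 : BesovSeq) = fun _ => 0 :=
    funext (besovSummand_zero p q s hp hq)
  have hΘsum : ∀ i : Fin (n+1),
      Summable (besovSummand p q s ((fun i => Fin.cases (motive := fun _ => BesovSeq) (0 : BesovSeq) θ i) i)) := by
    intro i
    refine Fin.cases ?_ ?_ i
    · simp only [Fin.cases_zero]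
      rw [hθ0]; exact summable_zero
    · intro i'; simp only [Fin.cases_succ]; exact hsum i'
  have ha' : ∑ i : Fin (n+1), (fun i => Fin.cases (motive := fun _ => ℝ) (-Sc) c i) i = 0 := by
    rw [Fin.sum_univ_succ]
    simp [hSc]
  have hE := hNT (n+1) (fun i => Fin.cases (motive := fun _ => BesovSeq) (0 : BesovSeq) θ i) hΘsum
    (fun i => Fin.cases (motive := fun _ => ℝ) (-Sc) c i) ha'
  simp only [Fin.sum_univ_succ, Fin.cases_zero, Fin.cases_succ,
    besovRho_self p q s hp hq, besovRho_symm p q s (0 : BesovSeq)] at hE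
  have h1 : ∑ x, -Sc * c x * besovRho p q s (θ x) 0 = -(Sc * A) := by
    calc ∑ x, -Sc * c x * besovRho p q s (θ x) 0
        = ∑ x, -Sc * (c x * besovRho p q s (θ x) 0) :=
          Finset.sum_congr rfl fun x _ => by ring
      _ = -Sc * A := by rw [← Finset.mul_sum, ← hA]
      _ = -(Sc * A) := by ring
  have h2 : ∑ x, (c x * -Sc * besovRho p q s (θ x) 0
        + ∑ y, c x * c y * besovRho p q s (θ x) (θ y)) = -(Sc * A) + P := by
    rw [Finset.sum_add_distrib, ← hP]
    congr 1
    calc ∑ x, c x * -Sc * besovRho p q s (θ x) 0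
        = ∑ x, -Sc * (c x * besovRho p q s (θ x) 0) :=
          Finset.sum_congr rfl fun x _ => by ring
      _ = -Sc * A := by rw [← Finset.mul_sum, ← hA]
      _ = -(Sc * A) := by ring
  rw [h1, h2] at hE
  have e1 : ∑ i, ∑ j, (c i * besovRho p q s (θ i) 0) * c j = Sc * A := by
    calc ∑ i, ∑ j, (c i * besovRho p q s (θ i) 0) * c j
        = ∑ i, (c i * besovRho p q s (θ i) 0) * Sc := by
          refine Finset.sum_congr rfl fun i _ => ?_
          rw [← Finset.mul_sum, ← hSc]
      _ = A * Sc := by rw [← Finset.sum_mul, ← hA]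
      _ = Sc * A := by ring
  have e2 : ∑ i, ∑ j, c i * (c j * besovRho p q s (θ j) 0) = Sc * A := by
    calc ∑ i, ∑ j, c i * (c j * besovRho p q s (θ j) 0)
        = ∑ i, c i * A := by
          refine Finset.sum_congr rfl fun i _ => ?_
          rw [← Finset.mul_sum, ← hA]
      _ = Sc * A := by rw [← Finset.sum_mul, ← hSc]
  have hgoal : ∑ i, ∑ j, c i * c j *
        (besovRho p q s (θ i) 0 + besovRho p q s (θ j) 0 - besovRho p q s (θ i) (θ j))
      = Sc * A + Sc * A - P := by
    have key : ∀ i j, c i * c j *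
          (besovRho p q s (θ i) 0 + besovRho p q s (θ j) 0 - besovRho p q s (θ i) (θ j))
        = ((c i * besovRho p q s (θ i) 0) * c j + c i * (c j * besovRho p q s (θ j) 0))
          - c i * c j * besovRho p q s (θ i) (θ j) := fun i j => by ring
    simp_rw [key, Finset.sum_sub_distrib, Finset.sum_add_distrib]
    rw [e1, e2, ← hP]
  rw [hgoal]
  linarith [hE]
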